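/- arXiv:1401.5542 — 4 statements merged into one kernel-verified Lean document; each statement's English description precedes it below -/
import Mathlib

section
/- Let I_k be the k×k identity matrix, R_k the k×k matrix whose first row consists entirely of 1's and all other entries 0, and S_k the k×k matrix with 1's on the subdiagonal and 0 elsewhere. Then det(I_k + R_k − S_k) = k + 1. -/
open Matrix

/-- R_k : first row all ones. -/
def Rmat (k : ℕ) : Matrix (Fin k) (Fin k) ℤ :=
  Matrix.of fun i _ => if (i : ℕ) = 0 then 1 else 0

/-- S_k : ones on the subdiagonal. -/
def Smat (k : ℕ) : Matrix (Fin k) (Fin k) ℤ :=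
  Matrix.of fun i j => if (i : ℕ) = (j : ℕ) + 1 then 1 else 0

theorem det_one_add_R_sub_S (k : ℕ) :
    Matrix.det (1 + Rmat k - Smat k) = (k : ℤ) + 1 := by
  have hfact : (1 + Rmat k - Smat k) =
      (1 - Smat k) * (1 + replicateCol Unit (fun _ : Fin k => (1:ℤ)) * replicateRow Unit (fun _ : Fin k => (1:ℤ))) := by
    ext i j
    rw [Matrix.mul_apply]
    have hJ : ∀ l, ((1 + replicateCol Unit (fun _ : Fin k => (1:ℤ)) * replicateRow Unit (fun _ : Fin k => (1:ℤ)) :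
          Matrix (Fin k) (Fin k) ℤ)) l j
        = (if l = j then 1 else 0) + 1 := by
      intro l
      simp [Matrix.add_apply, Matrix.one_apply, Matrix.mul_apply]
    simp only [hJ, Matrix.sub_apply, Matrix.one_apply, Smat, Rmat, Matrix.of_apply,
      Matrix.add_apply, sub_mul, mul_add, mul_one, ite_mul, one_mul, zero_mul,
      Finset.sum_sub_distrib, Finset.sum_add_distrib]
    have h3 : ∀ l : Fin k, (if (i:ℕ) = (l:ℕ) + 1 then ((if l = j then (1:ℤ) else 0)) else 0)
        = if l = j then (if (i:ℕ) = (j:ℕ) + 1 then 1 else 0) else 0 := by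
      intro l; by_cases h : l = j <;> simp [h]
    have h4 : (∑ l : Fin k, if (i:ℕ) = (l:ℕ) + 1 then (1:ℤ) else 0)
        = if (i:ℕ) = 0 then 0 else 1 := by
      by_cases h0 : (i:ℕ) = 0
      · rw [if_pos h0]
        apply Finset.sum_eq_zero
        intro l _
        rw [if_neg]
        omega
      · rw [if_neg h0]
        have hm : (i:ℕ) - 1 < k := by have := i.is_lt; omega
        have key : ∀ l : Fin k, ((i:ℕ) = (l:ℕ) + 1) ↔ l = ⟨(i:ℕ)-1, hm⟩ := by
          intro l
          constructor
          · intro h; apply Fin.ext; simp only []; omega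
          · intro h; subst h; simp only []; omega
        rw [Finset.sum_congr rfl (fun l _ => if_congr (key l) rfl rfl)]
        rw [Finset.sum_ite_eq' Finset.univ (⟨(i:ℕ)-1, hm⟩ : Fin k) (fun _ => (1:ℤ))]
        simp
    rw [Finset.sum_congr rfl (fun l _ => h3 l), h4]
    rw [Finset.sum_ite_eq Finset.univ i (fun l => if l = j then (1:ℤ) else 0),
      Finset.sum_ite_eq' Finset.univ j (fun _ => (if (i:ℕ) = (j:ℕ)+1 then (1:ℤ) else 0)),
      Finset.sum_ite_eq Finset.univ i (fun _ => (1:ℤ))]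
    by_cases hij : i = j
    · subst hij
      by_cases hi0 : (i:ℕ) = 0 <;> simp [hi0] <;> ring
    · by_cases hi0 : (i:ℕ) = 0 <;> simp [hij, hi0] <;> ring
  rw [hfact, Matrix.det_mul, Matrix.det_one_add_replicateCol_mul_replicateRow]
  have hS : (1 - Smat k).det = 1 := by
    rw [Matrix.det_of_lowerTriangular]
    · simp [Matrix.sub_apply, Matrix.one_apply, Smat]
    · intro a b hab
      have h : (a:ℕ) < (b:ℕ) := hab
      simp only [Matrix.sub_apply, Matrix.one_apply, Smat, Matrix.of_apply]
      rw [if_neg (by rintro rfl; omega), if_neg (by omega)]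
      ring
  rw [hS]
  simp [dotProduct, add_comm]
end

section
/- Let T : ℤⁿ → ℤᵐ be a ℤ-linear map given by an integer matrix. If some set of columns of the matrix spans a subgroup mapped isomorphically onto the image of T, and the cokernel of T is finite of order d, then the determinant of the corresponding square submatrix (formed by those m columns, assuming T has full rank m over ℚ) equals ±d. -/
open Matrix

lemma span_singleton_toAddSubgroup_eq_zmultiples (a : ℤ) :
    (Ideal.span {a}).toAddSubgroup = AddSubgroup.zmultiples a := by
  ext x
  simp only [Submodule.mem_toAddSubgroup, Ideal.mem_span_singleton,
    AddSubgroup.mem_zmultiples_iff]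
  constructor
  · rintro ⟨c, rfl⟩
    exact ⟨c, by rw [smul_eq_mul, mul_comm]⟩
  · rintro ⟨k, rfl⟩
    exact ⟨k, by rw [smul_eq_mul, mul_comm]⟩

theorem det_basic_submatrix_eq_card_coker (m n : ℕ) (A : Matrix (Fin m) (Fin n) ℤ)
    (g : Fin m → Fin n)
    (hrange : LinearMap.range (Matrix.toLin' (A.submatrix id g)) =
      LinearMap.range (Matrix.toLin' A))
    (hinj : Function.Injective (Matrix.toLin' (A.submatrix id g)))
    (d : ℕ) (hd0 : 0 < d)
    (hd : Nat.card ((Fin m → ℤ) ⧸ LinearMap.range (Matrix.toLin' A)) = d) :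
    (A.submatrix id g).det = d ∨ (A.submatrix id g).det = -d := by
  classical
  set B := A.submatrix id g with hB
  set N := LinearMap.range (Matrix.toLin' B) with hN
  have hdN : Nat.card ((Fin m → ℤ) ⧸ N) = d := by rw [hrange]; exact hd
  -- N is free of rank m via the injective map
  let e : (Fin m → ℤ) ≃ₗ[ℤ] N := LinearEquiv.ofInjective _ hinj
  let bN0 : Module.Basis (Fin m) ℤ N := (Pi.basisFun ℤ (Fin m)).map e
  obtain ⟨n', snf⟩ := N.smithNormalForm (Pi.basisFun ℤ (Fin m))
  have hn' : n' = m := by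
    have := Fintype.card_congr (Module.Basis.indexEquiv snf.bN bN0)
    simpa using this
  let σ : Fin n' ≃ Fin m :=
    Equiv.ofBijective snf.f ((Fintype.bijective_iff_injective_and_card _).2
      ⟨snf.f.injective, by simp [hn']⟩)
  have hσ : ∀ i, σ i = snf.f i := fun i => rfl
  -- the inclusion composed with the basis equivalence
  let F : (Fin m → ℤ) →ₗ[ℤ] (Fin m → ℤ) :=
    N.subtype ∘ₗ (snf.bM.equiv snf.bN σ.symm : (Fin m → ℤ) →ₗ[ℤ] N)
  have hFapply : ∀ j, F (snf.bM j) = snf.a (σ.symm j) • snf.bM j := by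
    intro j
    have h1 : F (snf.bM j) = (snf.bN (σ.symm j) : Fin m → ℤ) := by
      simp [F, Module.Basis.equiv_apply]
    rw [h1, snf.snf (σ.symm j)]
    congr 1
    rw [← hσ, Equiv.apply_symm_apply]
  have hFdiag : LinearMap.toMatrix snf.bM snf.bM F =
      Matrix.diagonal (fun j => snf.a (σ.symm j)) := by
    ext i j
    rw [LinearMap.toMatrix_apply, hFapply, _root_.map_smul, Module.Basis.repr_self]
    by_cases h : i = j
    · subst h; simp
    · simp [Matrix.diagonal_apply_ne _ h, Finsupp.single_eq_of_ne h]
  have hdetF : LinearMap.det F = ∏ i, snf.a i := by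
    rw [← LinearMap.det_toMatrix snf.bM, hFdiag, Matrix.det_diagonal]
    exact Equiv.prod_comp σ.symm snf.a
  -- |det B| = |det F|
  have hcomp : Matrix.toLin' B = N.subtype ∘ₗ (e : (Fin m → ℤ) →ₗ[ℤ] N) := rfl
  have hnatAbs : (LinearMap.det (Matrix.toLin' B)).natAbs = (LinearMap.det F).natAbs := by
    rw [hcomp]
    exact Int.natAbs_eq_iff_associated.mpr
      (LinearMap.associated_det_comp_equiv N.subtype e (snf.bM.equiv snf.bN σ.symm))
  -- index computation
  have hidx : N.toAddSubgroup.index = ∏ i, (snf.a i).natAbs := by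
    rw [snf.toAddSubgroup_index_eq_pow_mul_prod]
    have hcard : Fintype.card (Fin m) - n' = 0 := by simp [hn']
    rw [hcard, pow_zero, one_mul]
    congr 1
    ext i
    rw [span_singleton_toAddSubgroup_eq_zmultiples, Int.index_zmultiples]
  have hidx2 : N.toAddSubgroup.index = Nat.card ((Fin m → ℤ) ⧸ N) := rfl
  have hdet : (B.det).natAbs = d := by
    have h1 : (B.det).natAbs = (∏ i, snf.a i).natAbs := by
      rw [← LinearMap.det_toLin' B, hnatAbs, hdetF]
    rw [h1, show (∏ i, snf.a i).natAbs = ∏ i, (snf.a i).natAbs from map_prod Int.natAbsHom _ _, ← hidx, hidx2, hdN]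
  rcases Int.natAbs_eq B.det with h | h
  · left; rw [h, hdet]
  · right; rw [h, hdet]
end

section
/- Let M be the 3×3 block matrix over ℤ with blocks ((I, I, 0), (S, I, I), (R, 0, I)) where each block is (n−1)×(n−1), I is the identity, R has first row all 1's, and S has subdiagonal all 1's. Then det(M) = n. -/
open Matrix

/-- The 3×3 block matrix with rows of blocks (I, I, 0), (S, I, I), (R, 0, I),
each block of size (n-1)×(n-1). -/
def blockM (n : ℕ) : Matrix (Fin 3 × Fin (n - 1)) (Fin 3 × Fin (n - 1)) ℤ :=
  Matrix.of fun p q =>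
    (![![(1 : Matrix (Fin (n - 1)) (Fin (n - 1)) ℤ), 1, 0],
       ![Smat (n - 1), 1, 1],
       ![Rmat (n - 1), 0, 1]] p.1 q.1) p.2 q.2

/-- The equivalence between `Fin 3 × Fin k` and a triple sum. -/
def tripEquiv (k : ℕ) : Fin 3 × Fin k ≃ (Fin k ⊕ (Fin k ⊕ Fin k)) where
  toFun p := if p.1 = 0 then .inl p.2 else if p.1 = 1 then .inr (.inl p.2) else .inr (.inr p.2)
  invFun x := x.elim (fun a => (0, a)) (fun y => y.elim (fun a => (1, a)) (fun a => (2, a)))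
  left_inv p := by
    obtain ⟨i, a⟩ := p
    fin_cases i <;> simp
  right_inv x := by
    rcases x with a | a | a <;> simp

lemma sum_Smat_row (k : ℕ) (i : Fin k) :
    ∑ l : Fin k, Smat k i l = if (i : ℕ) = 0 then 0 else 1 := by
  rcases i with ⟨i, hi⟩
  cases i with
  | zero => simp [Smat]
  | succ m =>
    have hm : m < k := Nat.lt_of_succ_lt hi
    have : ∀ l : Fin k, Smat k ⟨m + 1, hi⟩ l = if l = ⟨m, hm⟩ then 1 else 0 := by
      intro l
      simp [Smat, Fin.ext_iff, eq_comm]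
    simp [this]

lemma det_one_sub_Smat (k : ℕ) : (1 - Smat k).det = 1 := by
  have h : (1 - Smat k).BlockTriangular OrderDual.toDual := by
    intro i j hij
    simp only [OrderDual.toDual_lt_toDual] at hij
    have h1 : (i : ℕ) ≠ (j : ℕ) + 1 := by omega
    simp [Smat, Matrix.one_apply, Fin.ext_iff, (Fin.lt_iff_val_lt_val.mp hij).ne, h1]
  rw [Matrix.det_of_lowerTriangular _ h]
  have : ∀ i : Fin k, (1 - Smat k) i i = 1 := by
    intro i; simp [Smat, Matrix.one_apply]
  simp [this]

lemma det_T (k : ℕ) : ((1 - Smat k) + Rmat k).det = (k : ℤ) + 1 := by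
  have hfac : (1 - Smat k) + Rmat k
      = (1 - Smat k) * (1 + Matrix.replicateCol (Fin 1) (fun _ => (1:ℤ)) * Matrix.replicateRow (Fin 1) (fun _ => (1:ℤ))) := by
    rw [Matrix.mul_add, Matrix.mul_one, ← Matrix.mul_assoc]
    congr 1
    ext i j
    rw [Matrix.mul_assoc]
    simp only [Matrix.mul_apply, Matrix.replicateCol_apply, Matrix.replicateRow_apply, Matrix.sub_apply,
      Finset.sum_const, Finset.card_univ, Fintype.card_fin, smul_eq_mul, mul_one,
      Finset.sum_sub_distrib]
    simp [Rmat, sum_Smat_row k i, Matrix.one_apply]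
    split <;> ring
  rw [hfac, Matrix.det_mul, det_one_sub_Smat]
  erw [Matrix.det_one_add_replicateCol_mul_replicateRow (ι := Fin 1)]
  simp [dotProduct]
  ring

theorem det_blockM (n : ℕ) (hn : 1 ≤ n) : (blockM n).det = n := by
  set k := n - 1 with hk
  set N : Matrix (Fin k ⊕ (Fin k ⊕ Fin k)) (Fin k ⊕ (Fin k ⊕ Fin k)) ℤ :=
    Matrix.fromBlocks 1 (Matrix.fromCols 1 0) (Matrix.fromRows (Smat k) (Rmat k))
      (Matrix.fromBlocks 1 1 0 1) with hN
  have hsub : blockM n = N.submatrix (tripEquiv k) (tripEquiv k) := by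
    ext p q
    obtain ⟨i, a⟩ := p
    obtain ⟨j, b⟩ := q
    fin_cases i <;> fin_cases j <;>
      simp [blockM, hN, tripEquiv, Matrix.fromBlocks, Matrix.fromCols, Matrix.fromRows_apply_inl, Matrix.fromRows_apply_inr,
        Matrix.vecHead, Matrix.vecTail] <;> rfl
  rw [hsub, Matrix.det_submatrix_equiv_self, hN, Matrix.det_fromBlocks_one₁₁,
    Matrix.fromRows_mul_fromCols]
  have h2 : Matrix.fromBlocks (1:Matrix (Fin k) (Fin k) ℤ) 1 0 1 -
      Matrix.fromBlocks (Smat k * 1) (Smat k * 0) (Rmat k * 1) (Rmat k * 0)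
      = Matrix.fromBlocks (1 - Smat k) 1 (-(Rmat k)) 1 := by
    ext x y
    rcases x with x | x <;> rcases y with y | y <;>
      simp [Matrix.fromBlocks]
  rw [h2, Matrix.det_fromBlocks_one₂₂]
  have h3 : (1 - Smat k) - 1 * -(Rmat k) = (1 - Smat k) + Rmat k := by
    rw [Matrix.one_mul, sub_neg_eq_add]
  rw [h3, det_T]
  have : ((k : ℤ)) + 1 = (n : ℤ) := by omega
  rw [this]
end

section
/- Let A be the 2k×2k block matrix over ℤ given by ((I_k + R_k + T_k, I_k), (S_k, I_k)). Then det(A) = 2k + 1. -/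
open Matrix

def Tmat (k : ℕ) : Matrix (Fin k) (Fin k) ℤ :=
  Matrix.of fun i j => if (i : ℕ) = k - 1 ∧ (j : ℕ) = k - 1 then 1 else 0

theorem det_A2k (k : ℕ) :
    (Matrix.fromBlocks (1 + Rmat k + Tmat k) 1 (Smat k) 1).det = 2 * k + 1 := by
  rw [Matrix.det_fromBlocks_one₂₂, Matrix.one_mul]
  cases k with
  | zero => simp
  | succ n =>
    set e : Fin (n+1) → ℤ := fun i => if (i : ℕ) = n then 1 else 0 with he
    set U : Matrix (Fin (n+1)) (Fin 2) ℤ :=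
      Matrix.of (fun i t => if t = 0 then 1 else e i) with hU
    set V : Matrix (Fin 2) (Fin (n+1)) ℤ :=
      Matrix.of (fun t j => if t = 0 then 1 else e j) with hV
    have hsum : ∀ (f : Fin (n+1) → ℤ),
        (∑ j : Fin (n+1), if (j : ℕ) = n then f j else 0) = f ⟨n, Nat.lt_succ_self n⟩ := by
      intro f
      rw [Finset.sum_eq_single (⟨n, Nat.lt_succ_self n⟩ : Fin (n+1))]
      · simp
      · intro b _ hb
        rw [if_neg]
        intro hbn
        exact hb (Fin.ext hbn)
      · simp
    have h1 : U * V = Matrix.of (fun i j => 1 + e i * e j) := by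
      ext i j
      simp [hU, hV, Matrix.mul_apply, Fin.sum_univ_two]
    have h2 : Smat (n+1) * Matrix.of (fun i j => (1 : ℤ) + e i * e j) =
        Matrix.of (fun (i _ : Fin (n+1)) => if (i : ℕ) = 0 then (0:ℤ) else 1) := by
      ext i j
      rw [Matrix.mul_apply]
      by_cases hi : (i : ℕ) = 0
      · rw [Finset.sum_eq_zero]
        · have hi0 : i = 0 := Fin.ext hi
          simp [hi, hi0]
        · intro l _
          simp only [Smat, Matrix.of_apply]
          rw [if_neg (by omega), zero_mul]
      · obtain ⟨m, hm⟩ := Nat.exists_eq_succ_of_ne_zero hi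
        have hmn : m < n + 1 := by have := i.isLt; omega
        rw [Finset.sum_eq_single (⟨m, hmn⟩ : Fin (n+1))]
        · have hml : m ≠ n := by have := i.isLt; omega
          have hi0 : i ≠ 0 := fun h => hi (by simp [h])
          simp [Smat, hm, he, hml, hi, hi0]
        · intro b _ hb
          have hne : (i : ℕ) ≠ (b : ℕ) + 1 := by
            intro hbm
            exact hb (Fin.ext (show (b : ℕ) = m by omega))
          simp [Smat, hne]
        · simp
    have key : 1 + Rmat (n+1) + Tmat (n+1) - Smat (n+1) =
        (1 - Smat (n+1)) * (1 + U * V) := by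
      rw [h1, Matrix.sub_mul, Matrix.one_mul, Matrix.mul_add, Matrix.mul_one, h2]
      ext i j
      simp only [Matrix.add_apply, Matrix.sub_apply, Matrix.one_apply, Matrix.of_apply,
        Rmat, Tmat, Smat, he, mul_ite, ite_mul, mul_one, mul_zero, one_mul, zero_mul,
        Nat.add_sub_cancel, Fin.ext_iff]
      split_ifs <;> omega
    have hdS : (1 - Smat (n+1)).det = 1 := by
      rw [Matrix.det_of_lowerTriangular _ ?_]
      · rw [Finset.prod_eq_one]
        intro i _
        simp [Smat, Matrix.one_apply]
      · intro i j hij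
        have hij' : (i : ℕ) < (j : ℕ) := hij
        simp only [Matrix.sub_apply, Matrix.one_apply, Smat, Matrix.of_apply, Fin.ext_iff]
        rw [if_neg (by omega), if_neg (by omega), sub_zero]
    have hVU : V * U = !![(n+1 : ℤ), 1; 1, 1] := by
      ext s t
      fin_cases s <;> fin_cases t <;>
        simp [hU, hV, Matrix.mul_apply, he, hsum, mul_ite, ite_mul,
          mul_one, mul_zero, one_mul, zero_mul, Finset.sum_ite_eq']
    rw [key, Matrix.det_mul, hdS, one_mul, Matrix.det_one_add_mul_comm, hVU]
    rw [Matrix.det_fin_two]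
    simp only [Matrix.add_apply, Matrix.one_apply, Matrix.cons_val', Matrix.cons_val_zero,
      Matrix.cons_val_one, Matrix.head_cons, Matrix.head_fin_const, Matrix.empty_val',
      Matrix.cons_val_fin_one]
    norm_num
    ring
end
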